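/- Let N be a normal closed subset of a hypergroup H, and let F be a closed subset of H containing N. Then F//N is strongly normal in H//N if and only if F is strongly normal in H. -/

import Mathlib

/-- A hypergroup: a set with a hypermultiplication, identity and involution
satisfying (H1), (H2), (H3). -/
structure Hypergroup (H : Type*) where
  hmul : H → H → Set H
  one : H
  star : H → H
  assoc : ∀ p q r : H, (⋃ x ∈ hmul q r, hmul p x) = ⋃ x ∈ hmul p q, hmul x r
  hmul_one : ∀ s : H, hmul s one = {s}
  inv_left : ∀ p q r : H, r ∈ hmul p q → q ∈ hmul (star p) r
  inv_right : ∀ p q r : H, r ∈ hmul p q → p ∈ hmul r (star q)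

namespace Hypergroup

variable {H : Type*} (G : Hypergroup H)

/-- Complex (set) product: `AB = ⋃_{a ∈ A, b ∈ B} ab`. -/
def smul (A B : Set H) : Set H := ⋃ a ∈ A, ⋃ b ∈ B, G.hmul a b

/-- `A* = { a* | a ∈ A }`. -/
def sstar (A : Set H) : Set H := G.star '' A

/-- A nonempty subset `F` is closed if `F*F ⊆ F`. -/
def IsClosed (F : Set H) : Prop := F.Nonempty ∧ G.smul (G.sstar F) F ⊆ F

/-- `F` is normal in `K`: `Fk ⊆ kF` for all `k ∈ K`. -/
def IsNormalIn (F K : Set H) : Prop := ∀ k ∈ K, G.smul F {k} ⊆ G.smul {k} F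

/-- `F` is strongly normal in `K`: `k*Fk ⊆ F` for all `k ∈ K`. -/
def IsStronglyNormalIn (F K : Set H) : Prop :=
  ∀ k ∈ K, G.smul (G.smul {G.star k} F) {k} ⊆ F

/-- An element `s` is thin if `s*s = {1}`. -/
def IsThinElem (s : H) : Prop := G.hmul (G.star s) s = {G.one}

/-- A hypergroup is thin if all elements are thin. -/
def IsThin : Prop := ∀ s : H, G.IsThinElem s

/-- The center `Z(H) = {h | hx = xh for all x, h*h = {1}}`. -/
def center : Set H :=
  {h | (∀ x : H, G.hmul h x = G.hmul x h) ∧ G.hmul (G.star h) h = {G.one}}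

/-- The class `h^F := FhF`. -/
def cls (F : Set H) (h : H) : Set H := G.smul (G.smul F {h}) F

/-- The quotient set `H//F := { h^F | h ∈ H }`. -/
def quotSet (F : Set H) : Set (Set H) := Set.range (G.cls F)

/-- The class `h^F` as an element of `H//F`. -/
def qcls (F : Set H) (h : H) : G.quotSet F := ⟨G.cls F h, h, rfl⟩

/-- The full preimage in `H` of the center of the quotient `H//T`:
`{h | h^T ∈ Z(H//T)}`, i.e. `h^T` commutes with all classes `y^T` and
`(h^T)*(h^T) = {1^T} = {T}`. -/
def qCenterPre (T : Set H) : Set H :=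
  {h | (∀ y : H, G.cls T '' (G.smul (G.smul {h} T) {y}) =
          G.cls T '' (G.smul (G.smul {y} T) {h})) ∧
       G.cls T '' (G.smul (G.smul {G.star h} T) {h}) = {T}}

/-- The upper central series: `Z₀(H) = {1}`, and `Zᵢ₊₁(H)` is the full preimage
of `Z(H//Zᵢ(H))`, i.e. `Zᵢ₊₁(H)//Zᵢ(H) = Z(H//Zᵢ(H))`. -/
def upperCentral : ℕ → Set H
  | 0 => {G.one}
  | n + 1 => G.qCenterPre (upperCentral n)

/-- A hypergroup is weakly nilpotent if `Zₙ(H) = H` for some `n`. -/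
def WeaklyNilpotent : Prop := ∃ n : ℕ, G.upperCentral n = Set.univ

/-- `F` is subnormal in `K` via a chain of successively normal closed subsets. -/
def IsSubnormalIn (F K : Set H) : Prop :=
  ∃ n : ℕ, ∃ C : ℕ → Set H, C 0 = F ∧ C n = K ∧
    ∀ i < n, C i ⊆ C (i + 1) ∧ G.IsClosed (C (i + 1)) ∧ G.IsNormalIn (C i) (C (i + 1))

/-- The quotient `K//N` is thin: `(k^N)*(k^N) = {1^N}` for all `k ∈ K`. -/
def QuotThin (N K : Set H) : Prop :=
  ∀ k ∈ K, G.cls N '' (G.smul (G.smul {G.star k} N) {k}) = {N}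

/-- A residually-thin chain from `{1}` to `K`. -/
def RTChainOn (K : Set H) (n : ℕ) (C : ℕ → Set H) : Prop :=
  C 0 = {G.one} ∧ C n = K ∧
    ∀ i < n, C i ⊆ C (i + 1) ∧ G.IsClosed (C (i + 1)) ∧ G.QuotThin (C i) (C (i + 1))

/-- The valency `n_K = ∏ |Cᵢ₊₁//Cᵢ|` computed along some RT chain for `K`. -/
def HasValencyOn (K : Set H) (m : ℕ) : Prop :=
  ∃ n C, G.RTChainOn K n C ∧
    m = ∏ i ∈ Finset.range n, Nat.card (G.cls (C i) '' C (i + 1))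

/-- A closed `p`-subset: a closed subset whose valency is a power of `p`. -/
def PSubsetOn (p : ℕ) (K : Set H) : Prop :=
  G.IsClosed K ∧ ∃ m k : ℕ, G.HasValencyOn K m ∧ m = p ^ k

/-- `h` is `p`-valenced in `K`: for every subnormal closed `p`-subset `U` of `K`
such that `(h*)^U h^U` consists of thin elements of the quotient,
`n_{(h*)^U h^U} = |(h*)^U h^U|` is a power of `p`. -/
def PValencedElemOn (p : ℕ) (K : Set H) (h : H) : Prop :=
  ∀ U : Set H, G.IsClosed U → U ⊆ K → G.IsSubnormalIn U K → G.PSubsetOn p U →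
    (∀ x ∈ G.smul (G.smul {G.star h} U) {h},
      G.cls U '' (G.smul (G.smul {G.star x} U) {x}) = {U}) →
    ∃ k : ℕ, Nat.card (G.cls U '' (G.smul (G.smul {G.star h} U) {h})) = p ^ k

/-- `K` is `p`-valenced if all its elements are. -/
def PValencedOn (p : ℕ) (K : Set H) : Prop := ∀ h ∈ K, G.PValencedElemOn p K h

end Hypergroup

namespace Hypergroup

variable {H : Type*} (G : Hypergroup H)

lemma mem_smul' {A B : Set H} {x : H} :
    x ∈ G.smul A B ↔ ∃ a ∈ A, ∃ b ∈ B, x ∈ G.hmul a b := by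
  simp [smul]

lemma smul_mono' {A A' B B' : Set H} (hA : A ⊆ A') (hB : B ⊆ B') :
    G.smul A B ⊆ G.smul A' B' := by
  intro x hx
  rw [G.mem_smul'] at hx ⊢
  obtain ⟨a, ha, b, hb, hx⟩ := hx
  exact ⟨a, hA ha, b, hB hb, hx⟩

lemma star_star' (a : H) : G.star (G.star a) = a := by
  have h1 : a ∈ G.hmul a G.one := by rw [G.hmul_one]; exact rfl
  have h2 : G.one ∈ G.hmul (G.star a) a := G.inv_left _ _ _ h1
  have h3 := G.inv_left _ _ _ h2
  rw [G.hmul_one] at h3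
  exact h3.symm

lemma one_mem_hmul_one' (a : H) : G.one ∈ G.hmul (G.star a) a := by
  have h1 : a ∈ G.hmul a G.one := by rw [G.hmul_one]; exact rfl
  exact G.inv_left _ _ _ h1

lemma mem_one_hmul' (h : H) : h ∈ G.hmul G.one h := by
  have h1 : G.one ∈ G.hmul (G.star (G.star h)) (G.star h) := G.one_mem_hmul_one' (G.star h)
  rw [G.star_star'] at h1
  have := G.inv_right _ _ _ h1
  rwa [G.star_star'] at this

lemma hmul_assoc_mem' {p q r x : H} :
    (∃ y ∈ G.hmul p q, x ∈ G.hmul y r) ↔ ∃ y ∈ G.hmul q r, x ∈ G.hmul p y := by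
  constructor
  · rintro ⟨y, hy, hx⟩
    have hmem : x ∈ ⋃ z ∈ G.hmul p q, G.hmul z r := Set.mem_biUnion hy hx
    rw [← G.assoc] at hmem
    simpa using hmem
  · rintro ⟨y, hy, hx⟩
    have hmem : x ∈ ⋃ z ∈ G.hmul q r, G.hmul p z := Set.mem_biUnion hy hx
    rw [G.assoc] at hmem
    simpa using hmem

lemma smul_assoc' (A B C : Set H) :
    G.smul (G.smul A B) C = G.smul A (G.smul B C) := by
  ext x
  simp only [mem_smul']
  constructor
  · rintro ⟨y, ⟨a, ha, b, hb, hy⟩, c, hc, hx⟩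
    obtain ⟨z, hz, hx'⟩ := (G.hmul_assoc_mem').mp ⟨y, hy, hx⟩
    exact ⟨a, ha, z, ⟨b, hb, c, hc, hz⟩, hx'⟩
  · rintro ⟨a, ha, z, ⟨b, hb, c, hc, hz⟩, hx⟩
    obtain ⟨y, hy, hx'⟩ := (G.hmul_assoc_mem').mpr ⟨z, hz, hx⟩
    exact ⟨y, ⟨a, ha, b, hb, hy⟩, c, hc, hx'⟩

lemma one_mem_closed' {F : Set H} (hF : G.IsClosed F) : G.one ∈ F := by
  obtain ⟨a, ha⟩ := hF.1
  apply hF.2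
  rw [G.mem_smul']
  exact ⟨G.star a, ⟨a, ha, rfl⟩, a, ha, G.one_mem_hmul_one' a⟩

lemma star_mem_closed' {F : Set H} (hF : G.IsClosed F) {a : H} (ha : a ∈ F) :
    G.star a ∈ F := by
  apply hF.2
  rw [G.mem_smul']
  refine ⟨G.star a, ⟨a, ha, rfl⟩, G.one, G.one_mem_closed' hF, ?_⟩
  rw [G.hmul_one]; exact rfl

lemma smul_subset_closed' {F A B : Set H} (hF : G.IsClosed F)
    (hA : A ⊆ F) (hB : B ⊆ F) : G.smul A B ⊆ F := by
  intro x hx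
  rw [G.mem_smul'] at hx
  obtain ⟨a, ha, b, hb, hx⟩ := hx
  apply hF.2
  rw [G.mem_smul']
  refine ⟨G.star (G.star a), ⟨G.star a, G.star_mem_closed' hF (hA ha), rfl⟩, b, hB hb, ?_⟩
  rwa [G.star_star']

lemma mem_cls_self' {N : Set H} (h1 : G.one ∈ N) (x : H) : x ∈ G.cls N x := by
  rw [cls, G.mem_smul']
  refine ⟨x, ?_, G.one, h1, by rw [G.hmul_one]; exact rfl⟩
  rw [G.mem_smul']
  exact ⟨G.one, h1, x, rfl, G.mem_one_hmul' x⟩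

lemma qcls_mem_image_iff' {N F : Set H} (hN : G.IsClosed N) (hF : G.IsClosed F)
    (hNF : N ⊆ F) {x : H} : G.qcls N x ∈ G.qcls N '' F ↔ x ∈ F := by
  constructor
  · rintro ⟨f, hf, heq⟩
    have hcls : G.cls N f = G.cls N x := congrArg Subtype.val heq
    have hx : x ∈ G.cls N f := hcls ▸ G.mem_cls_self' (G.one_mem_closed' hN) x
    have hsub : G.cls N f ⊆ F := by
      apply G.smul_subset_closed' hF _ hNF
      apply G.smul_subset_closed' hF hNF
      simpa using hf
    exact hsub hx
  · intro hx
    exact ⟨x, hx, rfl⟩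

end Hypergroup

/-- if `N` is a normal closed subset of `H` and `N ⊆ F` with `F`
closed, then `F//N` is strongly normal in `H//N` iff `F` is strongly normal
in `H`.  Here `Q` is the quotient hypergroup structure on `H//N`. -/
theorem quot_stronglyNormal_iff {H : Type*} (G : Hypergroup H) (N F : Set H)
    (hN : G.IsClosed N) (hNnormal : G.IsNormalIn N Set.univ)
    (hF : G.IsClosed F) (hNF : N ⊆ F)
    (Q : Hypergroup (G.quotSet N))
    (hmul : ∀ a b : H, Q.hmul (G.qcls N a) (G.qcls N b) =
      {x : G.quotSet N | ∃ y ∈ G.smul (G.smul {a} N) {b}, x = G.qcls N y})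
    (hone : Q.one = G.qcls N G.one)
    (hstar : ∀ h : H, Q.star (G.qcls N h) = G.qcls N (G.star h)) :
    Q.IsStronglyNormalIn (G.qcls N '' F) Set.univ ↔
      G.IsStronglyNormalIn F Set.univ := by
  have h1N : G.one ∈ N := G.one_mem_closed' hN
  constructor
  · -- quotient strongly normal → F strongly normal
    intro hQ k _ x hx
    rw [G.mem_smul'] at hx
    obtain ⟨u, hu, k', hk', hxk⟩ := hx
    rw [show k' = k from hk'] at hxk
    rw [G.mem_smul'] at hu
    obtain ⟨s, hs, f, hf, hu⟩ := hu
    rw [show s = G.star k from hs] at hu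
    have hmain := hQ (G.qcls N k) trivial
    have hxmem : G.qcls N x ∈
        Q.smul (Q.smul {Q.star (G.qcls N k)} (G.qcls N '' F)) {G.qcls N k} := by
      rw [Q.mem_smul']
      refine ⟨G.qcls N u, ?_, G.qcls N k, rfl, ?_⟩
      · rw [Q.mem_smul']
        refine ⟨Q.star (G.qcls N k), rfl, G.qcls N f, ⟨f, hf, rfl⟩, ?_⟩
        rw [hstar, hmul]
        refine ⟨u, ?_, rfl⟩
        rw [G.mem_smul']
        refine ⟨G.star k, ?_, f, rfl, hu⟩
        rw [G.mem_smul']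
        exact ⟨G.star k, rfl, G.one, h1N, by rw [G.hmul_one]; exact rfl⟩
      · rw [hmul]
        refine ⟨x, ?_, rfl⟩
        rw [G.mem_smul']
        refine ⟨u, ?_, k, rfl, hxk⟩
        rw [G.mem_smul']
        exact ⟨u, rfl, G.one, h1N, by rw [G.hmul_one]; exact rfl⟩
    have := hmain hxmem
    exact (G.qcls_mem_image_iff' hN hF hNF).mp this
  · -- F strongly normal → quotient strongly normal
    intro hSN K _ X hX
    obtain ⟨k, hk⟩ := K.property
    have hKeq : K = G.qcls N k := Subtype.ext hk.symm
    subst hKeq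
    rw [Q.mem_smul'] at hX
    obtain ⟨Y, hY, K', hK', hX⟩ := hX
    obtain rfl : K' = G.qcls N k := hK'
    rw [Q.mem_smul'] at hY
    obtain ⟨A, hA, B, hB, hY⟩ := hY
    obtain rfl : A = Q.star (G.qcls N k) := hA
    obtain ⟨f, hf, rfl⟩ := hB
    rw [hstar, hmul] at hY
    obtain ⟨y, hy, rfl⟩ := hY
    rw [hmul] at hX
    obtain ⟨x, hx, rfl⟩ := hX
    rw [G.qcls_mem_image_iff' hN hF hNF]
    -- x ∈ y N k with y ∈ (k*) N f ; show x ∈ F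
    have h1 : G.smul (G.smul {y} N) {k} ⊆
        G.smul (G.smul (G.smul (G.smul {G.star k} N) {f}) N) {k} := by
      apply G.smul_mono' _ subset_rfl
      apply G.smul_mono' _ subset_rfl
      simpa using hy
    have h2 : G.smul (G.smul (G.smul {G.star k} N) {f}) N
        = G.smul {G.star k} (G.smul (G.smul N {f}) N) := by
      simp only [G.smul_assoc']
    have h3 : G.smul (G.smul N {f}) N ⊆ F := by
      apply G.smul_subset_closed' hF _ hNF
      apply G.smul_subset_closed' hF hNF
      simpa using hf
    have h4 : G.smul (G.smul {y} N) {k} ⊆ G.smul (G.smul {G.star k} F) {k} := by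
      refine h1.trans ?_
      apply G.smul_mono' _ subset_rfl
      rw [h2]
      exact G.smul_mono' subset_rfl h3
    exact hSN k trivial (h4 hx)
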